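/- arXiv:1912.10989 — 3 statements merged into one kernel-verified Lean document; each statement's English description precedes it below -/
import Mathlib

section
/- If a finite simple graph G has an edge clique cover of size cc, then the number of minimal separators of G is at most 2^cc. -/
open scoped Classical

namespace PaperECC

variable {V : Type*}

/-- `nbhd G X` is N(X): vertices outside `X` with a neighbor in `X`. -/
def nbhd (G : SimpleGraph V) (X : Set V) : Set V :=
  {v | v ∉ X ∧ ∃ u ∈ X, G.Adj u v}

/-- `closedNbhd G X` is N[X] = X ∪ N(X). -/
def closedNbhd (G : SimpleGraph V) (X : Set V) : Set V :=
  X ∪ nbhd G X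

/-- closed neighborhood N[v] of a single vertex. -/
def vNbhd (G : SimpleGraph V) (v : V) : Set V :=
  insert v (G.neighborSet v)

/-- `IsCompOf G X C`: `C` is the vertex set of a connected component of `G \ X`. -/
def IsCompOf (G : SimpleGraph V) (X C : Set V) : Prop :=
  C.Nonempty ∧ Disjoint C X ∧ (G.induce C).Connected ∧
    ∀ u ∈ C, ∀ v, v ∉ X → G.Adj u v → v ∈ C

/-- `C` is a full component of `X`: a component of `G \ X` with N(C) = X. -/
def IsFullCompOf (G : SimpleGraph V) (X C : Set V) : Prop :=
  IsCompOf G X C ∧ nbhd G C = X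

/-- `S` is a minimal separator of `G`: it has at least two full components. -/
def IsMinSep (G : SimpleGraph V) (S : Set V) : Prop :=
  ∃ C D : Set V, C ≠ D ∧ IsFullCompOf G S C ∧ IsFullCompOf G S D

/-- `C` is a block of `G`: a component of `G \ N(C)` whose neighborhood is a minimal separator. -/
def IsBlock (G : SimpleGraph V) (C : Set V) : Prop :=
  IsCompOf G (nbhd G C) C ∧ IsMinSep G (nbhd G C)

/-- `H` is chordal: every (injectively embedded) cycle on at least 4 vertices has a chord,
i.e. there is no induced cycle on four or more vertices. -/
def IsChordal (H : SimpleGraph V) : Prop :=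
  ∀ n : ℕ, 4 ≤ n → ∀ f : ZMod n → V, Function.Injective f →
    (∀ i, H.Adj (f i) (f (i + 1))) →
    ∃ i j : ZMod n, i ≠ j ∧ j ≠ i + 1 ∧ i ≠ j + 1 ∧ H.Adj (f i) (f j)

/-- `H` is a triangulation of `G` (on the same vertex set). -/
def IsTri (G H : SimpleGraph V) : Prop :=
  IsChordal H ∧ G ≤ H

/-- `H` is a minimal triangulation of `G`. -/
def IsMinTri (G H : SimpleGraph V) : Prop :=
  IsTri G H ∧ ∀ H' : SimpleGraph V, IsTri G H' → H' ≤ H → H' = H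

/-- `Ω` is a maximal clique of `H`. -/
def IsMaxClique (H : SimpleGraph V) (Ω : Set V) : Prop :=
  H.IsClique Ω ∧ ∀ Ω' : Set V, H.IsClique Ω' → Ω ⊆ Ω' → Ω' = Ω

/-- `Ω` is a potential maximal clique of `G`: a maximal clique of some minimal triangulation. -/
def IsPMC (G : SimpleGraph V) (Ω : Set V) : Prop :=
  ∃ H : SimpleGraph V, IsMinTri G H ∧ IsMaxClique H Ω

/-- `W` is an edge clique cover of `G`: a finite collection of cliques covering all edges. -/
def IsECC (G : SimpleGraph V) (W : Finset (Set V)) : Prop :=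
  (∀ K ∈ W, G.IsClique K) ∧ ∀ u v : V, G.Adj u v → ∃ K ∈ W, u ∈ K ∧ v ∈ K

/-- `W[X]`: the cliques of `W` intersecting the vertex set `X`. -/
noncomputable def meeting (W : Finset (Set V)) (X : Set V) : Finset (Set V) :=
  W.filter (fun K => (K ∩ X).Nonempty)

/-- `V(G, W')`: the vertices all of whose cliques (within `W`) belong to `W'`. -/
def partVerts (W W' : Finset (Set V)) : Set V :=
  {v | ∀ K ∈ W, v ∈ K → K ∈ W'}

/-- The connected components of the subgraph of `G` induced on a vertex set `Y`. -/
def compsOf (G : SimpleGraph V) (Y : Set V) : Set (Set V) :=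
  {C | IsCompOf G Yᶜ C}

/-- `C(W')`: the components of the part `W'` of the edge clique cover `W`. -/
def partComps (G : SimpleGraph V) (W W' : Finset (Set V)) : Set (Set V) :=
  compsOf G (partVerts W W')

/-- `W'` is a good part of `W`: a nonempty subset all of whose components are blocks of `G`. -/
def IsGoodPart (G : SimpleGraph V) (W W' : Finset (Set V)) : Prop :=
  W' ⊆ W ∧ W'.Nonempty ∧ ∀ C ∈ partComps G W W', IsBlock G C

/-- The realization `R(C)` of a block `C`, as a graph supported on `N[C]`:
edges of `G[N[C]]` together with all pairs inside `N(C)`. -/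
def realization (G : SimpleGraph V) (C : Set V) : SimpleGraph V where
  Adj u v := u ≠ v ∧ u ∈ closedNbhd G C ∧ v ∈ closedNbhd G C ∧
    (G.Adj u v ∨ (u ∈ nbhd G C ∧ v ∈ nbhd G C))
  symm := by
    constructor
    intro u v h
    exact ⟨h.1.symm, h.2.2.1, h.2.1, h.2.2.2.elim (fun a => Or.inl a.symm)
      (fun a => Or.inr ⟨a.2, a.1⟩)⟩
  loopless := ⟨fun u h => h.1 rfl⟩

/-- The complete graph on the vertex set `Ω` (supported on `Ω`): all pairs inside `Ω`. -/
def cliqueOn (Ω : Set V) : SimpleGraph V where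
  Adj u v := u ≠ v ∧ u ∈ Ω ∧ v ∈ Ω
  symm := ⟨fun u v h => ⟨h.1.symm, h.2.2, h.2.1⟩⟩
  loopless := ⟨fun u h => h.1 rfl⟩

/-- The induced subgraph `G[A]`, as a graph supported on `A`. -/
def inducedOn (G : SimpleGraph V) (A : Set V) : SimpleGraph V where
  Adj u v := G.Adj u v ∧ u ∈ A ∧ v ∈ A
  symm := ⟨fun u v h => ⟨h.1.symm, h.2.2, h.2.1⟩⟩
  loopless := ⟨fun u h => G.loopless.1 u h.1⟩

/-- All edges of `H` lie inside the vertex set `A` (i.e. `H` has vertex set `A`). -/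
def edgesWithin (H : SimpleGraph V) (A : Set V) : Prop :=
  ∀ u v : V, H.Adj u v → u ∈ A ∧ v ∈ A

/-- `H` is a triangulation of the graph `G'` with vertex set `A`. -/
def IsTriOn (G' : SimpleGraph V) (A : Set V) (H : SimpleGraph V) : Prop :=
  IsChordal H ∧ G' ≤ H ∧ edgesWithin H A

/-- `H` is a minimal triangulation of the graph `G'` with vertex set `A`. -/
def IsMinTriOn (G' : SimpleGraph V) (A : Set V) (H : SimpleGraph V) : Prop :=
  IsTriOn G' A H ∧ ∀ H' : SimpleGraph V, IsTriOn G' A H' → H' ≤ H → H' = H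

/-- `M` is a module of `G`. -/
def IsModule (G : SimpleGraph V) (M : Set V) : Prop :=
  ∀ v ∉ M, (∀ u ∈ M, G.Adj v u) ∨ (∀ u ∈ M, ¬ G.Adj v u)

/-- Recovery map: from a subcollection `W'` of cliques, the set of vertices of `⋃ W'`
having a neighbor outside `⋃ W'`. -/
def recov (G : SimpleGraph V) (W' : Finset (Set V)) : Set V :=
  {v | v ∈ ⋃₀ (↑W' : Set (Set V)) ∧ ∃ w, G.Adj v w ∧ w ∉ ⋃₀ (↑W' : Set (Set V))}

lemma comp_subset {G : SimpleGraph V} {S C D : Set V}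
    (hC : IsCompOf G S C) (hD : IsCompOf G S D) {x : V} (hxC : x ∈ C) (hxD : x ∈ D) :
    C ⊆ D := by
  intro u hu
  obtain ⟨-, hCdisj, hconn, -⟩ := hC
  obtain ⟨p⟩ := hconn.preconnected ⟨x, hxC⟩ ⟨u, hu⟩
  have key : ∀ {a b : C} (_ : (G.induce C).Walk a b), (a : V) ∈ D → (b : V) ∈ D := by
    intro a b q
    induction q with
    | nil => exact id
    | @cons a c b h q ih =>
      intro ha
      apply ih
      have hadj : G.Adj (a : V) (c : V) := h
      exact hD.2.2.2 _ ha _ (fun hS => Set.disjoint_left.mp hCdisj c.2 hS) hadj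
  exact key p hxD

lemma recov_eq {G : SimpleGraph V} {W : Finset (Set V)} (hW : IsECC G W)
    {S C D : Set V} (hC : IsFullCompOf G S C) (hD : IsFullCompOf G S D)
    (hne : C ≠ D) : recov G (meeting W C) = S := by
  classical
  set T : Set V := ⋃₀ (↑(meeting W C) : Set (Set V)) with hT
  have hmemT : ∀ v : V, v ∈ T ↔ ∃ K ∈ W, (K ∩ C).Nonempty ∧ v ∈ K := by
    intro v
    constructor
    · rintro ⟨K, hK, hvK⟩
      rw [Finset.mem_coe, meeting, Finset.mem_filter] at hK
      exact ⟨K, hK.1, hK.2, hvK⟩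
    · rintro ⟨K, hKW, hKC, hvK⟩
      exact ⟨K, by rw [Finset.mem_coe, meeting, Finset.mem_filter]; exact ⟨hKW, hKC⟩, hvK⟩
  -- Claim 1 : S ⊆ T
  have hST : S ⊆ T := by
    intro v hv
    rw [← hC.2] at hv
    obtain ⟨hvC, u, huC, hadj⟩ := hv
    obtain ⟨K, hKW, huK, hvK⟩ := hW.2 u v hadj
    exact (hmemT v).2 ⟨K, hKW, ⟨u, huK, huC⟩, hvK⟩
  -- Claim 2 : T ⊆ C ∪ S
  have hTCS : ∀ z ∈ T, z ∈ C ∪ S := by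
    intro z hz
    obtain ⟨K, hKW, ⟨u, huK, huC⟩, hzK⟩ := (hmemT z).1 hz
    by_cases hzC : z ∈ C
    · exact Or.inl hzC
    · right
      rw [← hC.2]
      rcases eq_or_ne z u with rfl | hzu
      · exact absurd huC hzC
      · exact ⟨hzC, u, huC, hW.1 K hKW huK hzK (Ne.symm hzu)⟩
  -- Disjointness of C and D
  have hCD : ∀ z, z ∈ C → z ∈ D → False := by
    intro z hzC hzD
    exact hne (Set.Subset.antisymm (comp_subset hC.1 hD.1 hzC hzD)
      (comp_subset hD.1 hC.1 hzD hzC))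
  ext v
  constructor
  · rintro ⟨hvT, w, hadj, hwT⟩
    rcases hTCS v hvT with hvC | hvS
    · by_cases hwS : w ∈ S
      · exact absurd (hST hwS) hwT
      · have hwC : w ∈ C := hC.1.2.2.2 v hvC w hwS hadj
        obtain ⟨K, hKW, hvK, hwK⟩ := hW.2 v w hadj
        exact absurd ((hmemT w).2 ⟨K, hKW, ⟨v, hvK, hvC⟩, hwK⟩) hwT
    · exact hvS
  · intro hv
    refine ⟨hST hv, ?_⟩
    have hv' : v ∈ nbhd G D := by rw [hD.2]; exact hv
    obtain ⟨hvD, u, huD, hadj⟩ := hv'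
    refine ⟨u, hadj.symm, fun huT => ?_⟩
    rcases hTCS u huT with huC | huS
    · exact hCD u huC huD
    · exact Set.disjoint_left.mp hD.1.2.1 huD huS

/-- If a finite simple graph `G` has an edge clique cover of size `cc`,
then the number of minimal separators of `G` is at most `2 ^ cc`. -/
theorem num_minimal_separators_le {V : Type*} [Fintype V] (G : SimpleGraph V)
    (cc : ℕ) (W : Finset (Set V)) (hW : IsECC G W) (hcard : W.card = cc) :
    {S : Set V | IsMinSep G S}.ncard ≤ 2 ^ cc := by
  classical
  subst hcard
  set f : Set V → Finset (Set V) := fun S =>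
    if h : IsMinSep G S then meeting W h.choose else ∅ with hf
  have hrec : ∀ S, IsMinSep G S → recov G (f S) = S := by
    intro S h
    have : f S = meeting W h.choose := by rw [hf]; simp only [dif_pos h]
    rw [this]
    obtain ⟨D, hne, hCfull, hDfull⟩ := h.choose_spec
    exact recov_eq hW hCfull hDfull hne
  have hle : {S : Set V | IsMinSep G S}.ncard ≤
      (↑(W.powerset) : Set (Finset (Set V))).ncard := by
    apply Set.ncard_le_ncard_of_injOn f
    · intro S hS
      rw [Set.mem_setOf_eq] at hS
      have : f S = meeting W hS.choose := by rw [hf]; simp only [dif_pos hS]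
      rw [Finset.mem_coe, Finset.mem_powerset, this, meeting]
      exact Finset.filter_subset _ _
    · intro S hS S' hS' heq
      rw [Set.mem_setOf_eq] at hS hS'
      have h2 := congrArg (recov G) heq
      rw [hrec S hS, hrec S' hS'] at h2
      exact h2
  calc {S : Set V | IsMinSep G S}.ncard
      ≤ (↑(W.powerset) : Set (Finset (Set V))).ncard := hle
    _ = W.powerset.card := Set.ncard_coe_finset _
    _ = 2 ^ W.card := Finset.card_powerset W

end PaperECC
end

section
/- Let G be a finite connected simple graph with an edge clique cover W. Then every minimal triangulation H of G has a maximal clique Ω such that every connected component C of G \ Ω satisfies |W[C]| ≤ |W|/2, where W[C] is the set of cliques of W intersecting C. -/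
open scoped Classical

namespace PaperECC

variable {V : Type*}

section Aux

open Relation

variable {V : Type*}

/-- Auxiliary relation: edges of `H` avoiding `Ω`. -/
def AvoidRel (H : SimpleGraph V) (Ω : Set V) : V → V → Prop :=
  fun a b => H.Adj a b ∧ a ∉ Ω ∧ b ∉ Ω

/-- The set of vertices reachable from `v` in `H \ Ω`. -/
def hcomp (H : SimpleGraph V) (Ω : Set V) (v : V) : Set V :=
  {u | Relation.ReflTransGen (AvoidRel H Ω) v u}

lemma mem_hcomp {H : SimpleGraph V} {Ω : Set V} {v u : V} :
    u ∈ hcomp H Ω v ↔ Relation.ReflTransGen (AvoidRel H Ω) v u := Iff.rfl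

lemma hcomp_self {H : SimpleGraph V} {Ω : Set V} {v : V} : v ∈ hcomp H Ω v :=
  Relation.ReflTransGen.refl

lemma hcomp_not_mem {H : SimpleGraph V} {Ω : Set V} {v : V} (hv : v ∉ Ω) :
    ∀ u ∈ hcomp H Ω v, u ∉ Ω := by
  intro u hu
  induction hu with
  | refl => exact hv
  | tail _ hbc _ => exact hbc.2.2

lemma hcomp_closed {H : SimpleGraph V} {Ω : Set V} {v : V} (hv : v ∉ Ω) {u w : V}
    (hu : u ∈ hcomp H Ω v) (hadj : H.Adj u w) (hw : w ∉ Ω) : w ∈ hcomp H Ω v :=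
  Relation.ReflTransGen.tail hu ⟨hadj, hcomp_not_mem hv u hu, hw⟩

lemma hcomp_conn {H : SimpleGraph V} {Ω : Set V} {v : V} :
    ∀ u ∈ hcomp H Ω v, ∀ u' ∈ hcomp H Ω v,
      Relation.ReflTransGen (fun a b => H.Adj a b ∧ b ∈ hcomp H Ω v) u u' := by
  have hsymm : Symmetric (AvoidRel H Ω) := fun a b h => ⟨h.1.symm, h.2.2, h.2.1⟩
  intro u hu u' hu'
  have h1 : Relation.ReflTransGen (AvoidRel H Ω) u u' :=
    ((haveI : Std.Symm (AvoidRel H Ω) := ⟨hsymm⟩; (Relation.ReflTransGen.symmetric : Std.Symm (Relation.ReflTransGen (AvoidRel H Ω))).symm _ _ hu)).trans hu'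
  clear hu'
  induction h1 with
  | refl => exact Relation.ReflTransGen.refl
  | tail hab hbc ih =>
      exact Relation.ReflTransGen.tail ih
        ⟨hbc.1, hu.trans (hab.trans (Relation.ReflTransGen.single hbc))⟩

/-- Any clique extends to a maximal clique (finite vertex set). -/
lemma exists_maxclique [Fintype V] (H : SimpleGraph V) {K : Set V} (hK : H.IsClique K) :
    ∃ Ω : Set V, K ⊆ Ω ∧ IsMaxClique H Ω := by
  obtain ⟨Ω, hΩmem, hmax⟩ := Set.Finite.exists_maximalFor id
    {Ω : Set V | H.IsClique Ω ∧ K ⊆ Ω} (Set.toFinite _) ⟨K, hK, subset_rfl⟩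
  obtain ⟨hΩcl, hKΩ⟩ := hΩmem
  exact ⟨Ω, hKΩ, hΩcl, fun Ω' hΩ' hsub => le_antisymm (hmax ⟨hΩ', hKΩ.trans hsub⟩ hsub) hsub⟩

/-- Chordality rephrased with `ℕ`-indexed cycles. -/
lemma chordal_chord {H : SimpleGraph V} (hch : IsChordal H) {n : ℕ} (hn : 4 ≤ n)
    (g : ℕ → V) (hinj : ∀ a < n, ∀ b < n, g a = g b → a = b)
    (hadj : ∀ a, a + 1 < n → H.Adj (g a) (g (a + 1)))
    (hwrap : H.Adj (g (n - 1)) (g 0)) :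
    ∃ a b, a < n ∧ b < n ∧ a ≠ b ∧ b ≠ (a + 1) % n ∧ a ≠ (b + 1) % n ∧ H.Adj (g a) (g b) := by
  haveI : NeZero n := ⟨by omega⟩
  have hval1 : (1 : ZMod n).val = 1 := by
    rw [ZMod.val_one_eq_one_mod, Nat.mod_eq_of_lt (by omega)]
  have hsucc : ∀ z : ZMod n, (z + 1).val = (z.val + 1) % n := by
    intro z; rw [ZMod.val_add, hval1]
  set f : ZMod n → V := fun z => g z.val with hf
  have hfinj : Function.Injective f := by
    intro a b hab
    exact ZMod.val_injective n (hinj _ (ZMod.val_lt a) _ (ZMod.val_lt b) hab)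
  have hfadj : ∀ i : ZMod n, H.Adj (f i) (f (i + 1)) := by
    intro i
    rcases Nat.lt_or_ge (i.val + 1) n with h | h
    · have hv : (i + 1).val = i.val + 1 := by rw [hsucc, Nat.mod_eq_of_lt h]
      simpa [hf, hv] using hadj i.val h
    · have hv : i.val = n - 1 := by have := ZMod.val_lt i; omega
      have h1 : i.val + 1 = n := by omega
      have hv0 : (i + 1).val = 0 := by rw [hsucc, h1, Nat.mod_self]
      simpa [hf, hv0, hv] using hwrap
  obtain ⟨i, j, hij, hji1, hij1, hadj'⟩ := hch n hn f hfinj hfadj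
  refine ⟨i.val, j.val, ZMod.val_lt i, ZMod.val_lt j, ?_, ?_, ?_, hadj'⟩
  · intro h; exact hij (ZMod.val_injective n h)
  · intro h
    exact hji1 (ZMod.val_injective n (by rw [hsucc]; exact h))
  · intro h
    exact hij1 (ZMod.val_injective n (by rw [hsucc]; exact h))

/-- Key step of the Dirac-type lemma. -/
lemma dirac_step {H : SimpleGraph V} (hch : IsChordal H) {C : Set V} {S₀ : Finset V}
    {t v : V} (htC : t ∉ C) (hS₀C : ∀ s ∈ S₀, s ∉ C)
    (hst : ∀ s ∈ S₀, H.Adj s t) (hvadj : ∀ s ∈ S₀, H.Adj v s)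
    (hpath : ∃ k : ℕ, ∃ x : ℕ → V, x 0 = v ∧ (∀ i ≤ k, x i ∈ C) ∧
      (∀ i < k, H.Adj (x i) (x (i + 1))) ∧ H.Adj (x k) t) :
    ∃ w ∈ C, H.Adj w t ∧ ∀ s ∈ S₀, H.Adj w s := by
  classical
  set P : ℕ → Prop := fun k => ∃ x : ℕ → V, x 0 = v ∧ (∀ i ≤ k, x i ∈ C) ∧
      (∀ i < k, H.Adj (x i) (x (i + 1))) ∧ H.Adj (x k) t with hP
  have hPex : ∃ k, P k := hpath
  set k := Nat.find hPex with hk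
  obtain ⟨x, hx0, hxC, hxadj, hxkt⟩ : P k := Nat.find_spec hPex
  have m1 : ∀ i < k, ¬ H.Adj (x i) t := by
    intro i hik hadj
    exact Nat.find_min hPex hik
      ⟨x, hx0, fun m hm => hxC m (by omega), fun m hm => hxadj m (by omega), hadj⟩
  have m2 : ∀ i j, i + 1 < j → j ≤ k → ¬ H.Adj (x i) (x j) := by
    intro i j hij hjk hadj
    apply Nat.find_min hPex (show k - (j - i - 1) < k by omega)
    refine ⟨fun m => if m ≤ i then x m else x (m + (j - i - 1)), by simp [hx0], ?_, ?_, ?_⟩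
    · intro m hm
      by_cases h : m ≤ i
      · simpa [h] using hxC m (by omega)
      · simpa [h] using hxC (m + (j - i - 1)) (by omega)
    · intro m hm
      by_cases h1 : m + 1 ≤ i
      · simpa [h1, show m ≤ i by omega] using hxadj m (by omega)
      · by_cases h2 : m ≤ i
        · have hmi : m = i := by omega
          subst hmi
          have hseam : m + 1 + (j - m - 1) = j := by omega
          simpa [show ¬ (m + 1 ≤ m) by omega, hseam] using hadj
        · have hsh : m + (j - i - 1) + 1 = m + 1 + (j - i - 1) := by omega
          simp only [if_neg h1, if_neg h2]
          rw [← hsh]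
          exact hxadj (m + (j - i - 1)) (by omega)
    · have h1 : ¬ (k - (j - i - 1) ≤ i) := by omega
      have h2 : k - (j - i - 1) + (j - i - 1) = k := by omega
      simp only [if_neg h1, h2]
      exact hxkt
  have m3 : ∀ i j, i < j → j ≤ k → x i ≠ x j := by
    intro i j hij hjk heq
    by_cases hjk' : j = k
    · exact m1 i (by omega) (by rw [heq, hjk']; exact hxkt)
    · apply Nat.find_min hPex (show k - (j - i) < k by omega)
      refine ⟨fun m => if m ≤ i then x m else x (m + (j - i)), by simp [hx0], ?_, ?_, ?_⟩
      · intro m hm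
        by_cases h : m ≤ i
        · simpa [h] using hxC m (by omega)
        · simpa [h] using hxC (m + (j - i)) (by omega)
      · intro m hm
        by_cases h1 : m + 1 ≤ i
        · simpa [h1, show m ≤ i by omega] using hxadj m (by omega)
        · by_cases h2 : m ≤ i
          · have hmi : m = i := by omega
            subst hmi
            have hseam : m + 1 + (j - m) = j + 1 := by omega
            simpa [show ¬ (m + 1 ≤ m) by omega, hseam, heq] using hxadj j (by omega)
          · have hsh : m + (j - i) + 1 = m + 1 + (j - i) := by omega
            simp only [if_neg h1, if_neg h2]
            rw [← hsh]
            exact hxadj (m + (j - i)) (by omega)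
      · have h1 : ¬ (k - (j - i) ≤ i) := by omega
        have h2 : k - (j - i) + (j - i) = k := by omega
        simp only [if_neg h1, h2]
        exact hxkt
  refine ⟨x k, hxC k le_rfl, hxkt, ?_⟩
  intro s hs
  have hsQ0 : H.Adj s (x 0) := by rw [hx0]; exact (hvadj s hs).symm
  set Q : ℕ → Prop := fun i => H.Adj s (x i) with hQ
  set i₀ := Nat.findGreatest Q k with hi₀def
  have hi₀ : Q i₀ := Nat.findGreatest_spec (Nat.zero_le k) hsQ0
  have hi₀k : i₀ ≤ k := Nat.findGreatest_le k
  by_cases hik : i₀ = k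
  · exact (hik ▸ hi₀).symm
  exfalso
  have hi₀k' : i₀ < k := lt_of_le_of_ne hi₀k hik
  obtain ⟨n, hn⟩ : ∃ n : ℕ, n = k - i₀ + 3 := ⟨_, rfl⟩
  have hn4 : 4 ≤ n := by omega
  set g : ℕ → V := fun a => if a = 0 then s else if a = n - 1 then t else x (i₀ + a - 1) with hg
  have g0 : g 0 = s := by simp [hg]
  have glast : g (n - 1) = t := by simp [hg, show n - 1 ≠ 0 by omega]
  have gmid : ∀ a, 1 ≤ a → a ≤ n - 2 → g a = x (i₀ + a - 1) := by
    intro a h1 h2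
    simp [hg, show a ≠ 0 by omega, show a ≠ n - 1 by omega]
  have hsC : s ∉ C := hS₀C s hs
  have hstadj : H.Adj s t := hst s hs
  have ginj : ∀ a < n, ∀ b < n, g a = g b → a = b := by
    intro a ha b hb heq
    by_contra hne
    wlog hab' : a < b generalizing a b
    · exact this b hb a ha heq.symm (Ne.symm hne) (by omega)
    by_cases ha0 : a = 0
    · subst ha0
      rw [g0] at heq
      by_cases hb1 : b = n - 1
      · rw [hb1, glast] at heq
        exact hstadj.ne heq
      · rw [gmid b (by omega) (by omega)] at heq
        exact hsC (heq ▸ hxC (i₀ + b - 1) (by omega))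
    · have ha1 : 1 ≤ a := by omega
      by_cases hb1 : b = n - 1
      · rw [hb1, glast, gmid a ha1 (by omega)] at heq
        exact htC (heq ▸ hxC (i₀ + a - 1) (by omega))
      · rw [gmid a ha1 (by omega), gmid b (by omega) (by omega)] at heq
        exact m3 (i₀ + a - 1) (i₀ + b - 1) (by omega) (by omega) heq
  have gadj : ∀ a, a + 1 < n → H.Adj (g a) (g (a + 1)) := by
    intro a ha
    by_cases ha0 : a = 0
    · subst ha0
      rw [g0, gmid 1 le_rfl (by omega)]
      simpa using hi₀
    · by_cases hal : a = n - 2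
      · have h1 : a + 1 = n - 1 := by omega
        rw [h1, glast, gmid a (by omega) (by omega)]
        have h2 : i₀ + a - 1 = k := by omega
        rw [h2]; exact hxkt
      · rw [gmid a (by omega) (by omega), gmid (a + 1) (by omega) (by omega)]
        have h2 : i₀ + (a + 1) - 1 = (i₀ + a - 1) + 1 := by omega
        rw [h2]
        exact hxadj (i₀ + a - 1) (by omega)
  have gwrap : H.Adj (g (n - 1)) (g 0) := by
    rw [g0, glast]
    exact hstadj.symm
  obtain ⟨a, b, han, hbn, hab, hba1, hab1, hadjab⟩ := chordal_chord hch hn4 g ginj gadj gwrap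
  · -- derive contradiction from the chord
    have not_chord : ∀ a b, a < b → b < n → b ≠ (a + 1) % n → a ≠ (b + 1) % n →
        ¬ H.Adj (g a) (g b) := by
      intro a b hab' hbn' hba1' hab1' hadj'
      by_cases ha0 : a = 0
      · subst ha0
        by_cases hb : b = n - 1
        · apply hab1'
          subst hb
          have h1 : n - 1 + 1 = n := by omega
          rw [h1, Nat.mod_self]
        · have hb1 : b ≠ 1 := by
            intro h; apply hba1'; rw [h, Nat.mod_eq_of_lt (by omega)]
          have hb2 : 2 ≤ b := by omega
          have hbl : b ≤ n - 2 := by omega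
          refine Nat.findGreatest_is_greatest (show i₀ < i₀ + b - 1 by omega)
            (show i₀ + b - 1 ≤ k by omega) ?_
          show H.Adj s (x (i₀ + b - 1))
          rw [← g0, ← gmid b (by omega) hbl]
          exact hadj'
      · have ha1 : 1 ≤ a := by omega
        have han1 : a ≤ n - 2 := by omega
        by_cases hb : b = n - 1
        · have haa : a + 1 < n := by omega
          have hanm : a ≠ n - 2 := by
            intro h
            apply hba1'
            rw [hb, Nat.mod_eq_of_lt haa]; omega
          apply m1 (i₀ + a - 1) (by omega)
          rw [hb, glast, gmid a ha1 han1] at hadj'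
          exact hadj'
        · have hbl : b ≤ n - 2 := by omega
          have hbna : b ≠ a + 1 := by
            intro h; apply hba1'; rw [h, Nat.mod_eq_of_lt (by omega)]
          apply m2 (i₀ + a - 1) (i₀ + b - 1) (by omega) (by omega)
          rw [← gmid a ha1 han1, ← gmid b (by omega) hbl]
          exact hadj'
    rcases lt_trichotomy a b with h | h | h
    · exact not_chord a b h hbn hba1 hab1 hadjab
    · exact hab h
    · exact not_chord b a h han hab1 hba1 hadjab.symm

/-- Convert reflexive-transitive reachability within `C` to an indexed path. -/
lemma rt_path {H : SimpleGraph V} {C : Set V} {v c : V} (hv : v ∈ C)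
    (h : Relation.ReflTransGen (fun a b => H.Adj a b ∧ b ∈ C) v c) :
    ∃ k : ℕ, ∃ x : ℕ → V, x 0 = v ∧ (∀ i ≤ k, x i ∈ C) ∧
      (∀ i < k, H.Adj (x i) (x (i + 1))) ∧ x k = c := by
  induction h with
  | refl => exact ⟨0, fun _ => v, rfl, fun i _ => hv, by omega, rfl⟩
  | @tail b c hab hbc ih =>
      obtain ⟨k, x, h0, hC, hadj, hlast⟩ := ih
      refine ⟨k + 1, fun i => if i ≤ k then x i else c, by simp [h0], ?_, ?_, by simp⟩
      · intro i hi
        by_cases h : i ≤ k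
        · simpa [h] using hC i h
        · simpa [h] using hbc.2
      · intro i hi
        by_cases h : i + 1 ≤ k
        · simpa [h, show i ≤ k by omega] using hadj i (by omega)
        · have hik : i = k := by omega
          subst hik
          simpa [hlast] using hbc.1

/-- Dirac-type lemma: if `C` is connected, disjoint from the clique `S`, and every vertex of
`S` has a neighbor in `C`, then some vertex of `C` is adjacent to all of `S`. -/
lemma dirac {H : SimpleGraph V} (hch : IsChordal H) {C : Set V} (hCne : C.Nonempty)
    (hconn : ∀ u ∈ C, ∀ w ∈ C,
      Relation.ReflTransGen (fun a b => H.Adj a b ∧ b ∈ C) u w)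
    (S : Finset V) :
    (∀ s ∈ S, s ∉ C) → H.IsClique ↑S → (∀ s ∈ S, ∃ c ∈ C, H.Adj s c) →
    ∃ v ∈ C, ∀ s ∈ S, H.Adj v s := by
  classical
  induction S using Finset.induction_on with
  | empty =>
      intro _ _ _
      obtain ⟨v, hv⟩ := hCne
      exact ⟨v, hv, by simp⟩
  | @insert t S₀ ht ih =>
      intro hSC hScl hSnb
      obtain ⟨v, hvC, hvadj⟩ := ih (fun s hs => hSC s (Finset.mem_insert_of_mem hs))
        (hScl.subset (by simp [Finset.coe_subset, Finset.subset_insert]))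
        (fun s hs => hSnb s (Finset.mem_insert_of_mem hs))
      by_cases hvt : H.Adj v t
      · refine ⟨v, hvC, fun s hs => ?_⟩
        rcases Finset.mem_insert.mp hs with h | h
        · exact h ▸ hvt
        · exact hvadj s h
      · obtain ⟨c, hcC, htc⟩ := hSnb t (Finset.mem_insert_self t S₀)
        obtain ⟨k, x, h0, hC', hadj, hlast⟩ := rt_path hvC (hconn v hvC c hcC)
        have htCn : t ∉ C := hSC t (Finset.mem_insert_self t S₀)
        have hst : ∀ s ∈ S₀, H.Adj s t := by
          intro s hs
          exact hScl (by simp [hs]) (by simp) (fun h => ht (h ▸ hs))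
        obtain ⟨w, hwC, hwt, hws⟩ := dirac_step hch htCn
          (fun s hs => hSC s (Finset.mem_insert_of_mem hs)) hst hvadj
          ⟨k, x, h0, hC', hadj, hlast ▸ htc.symm⟩
        refine ⟨w, hwC, fun s hs => ?_⟩
        rcases Finset.mem_insert.mp hs with h | h
        · exact h ▸ hwt
        · exact hws s h

/-- A `G`-component of `G \ Ω` is contained in the `H`-reachability class of any of its
vertices. -/
lemma compOf_subset_hcomp {G H : SimpleGraph V} (hGH : G ≤ H) {Ω C : Set V}
    (hC : IsCompOf G Ω C) {v : V} (hv : v ∈ C) : C ⊆ hcomp H Ω v := by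
  have key : ∀ (a b : C), (G.induce C).Walk a b →
      Relation.ReflTransGen (AvoidRel H Ω) a.1 b.1 := by
    intro a b p
    induction p with
    | nil => exact Relation.ReflTransGen.refl
    | @cons a' b' c' h p ih =>
        exact Relation.ReflTransGen.head
          ⟨hGH h, Set.disjoint_left.mp hC.2.1 a'.2, Set.disjoint_left.mp hC.2.1 b'.2⟩ ih
  intro u hu
  obtain ⟨p⟩ := hC.2.2.1.preconnected ⟨v, hv⟩ ⟨u, hu⟩
  exact key _ _ p

lemma meeting_mono (W : Finset (Set V)) {C D : Set V} (h : C ⊆ D) :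
    meeting W C ⊆ meeting W D := by
  classical
  refine Finset.monotone_filter_right _ ?_
  intro K hK
  exact fun hK' => ⟨hK'.choose, hK'.choose_spec.1, h hK'.choose_spec.2⟩

end Aux

/-- Every minimal triangulation `H` of `G` has a maximal clique `Ω` such
that every component `C` of `G \ Ω` satisfies `|W[C]| ≤ |W| / 2`. -/
theorem balanced_max_clique {V : Type*} [Fintype V] (G : SimpleGraph V) (hG : G.Connected)
    (W : Finset (Set V)) (hW : IsECC G W) (H : SimpleGraph V) (hH : IsMinTri G H) :
    ∃ Ω : Set V, IsMaxClique H Ω ∧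
      ∀ C : Set V, IsCompOf G Ω C → 2 * (meeting W C).card ≤ W.card := by
  classical
  obtain ⟨⟨hch, hle⟩, -⟩ := hH
  by_cases hgood : ∃ Ω : Set V, IsMaxClique H Ω ∧
      ∀ v, v ∉ Ω → 2 * (meeting W (hcomp H Ω v)).card ≤ W.card
  · obtain ⟨Ω, hΩ, hsmall⟩ := hgood
    refine ⟨Ω, hΩ, fun C hC => ?_⟩
    obtain ⟨v, hv⟩ := hC.1
    have hvΩ : v ∉ Ω := Set.disjoint_left.mp hC.2.1 hv
    have hsub : C ⊆ hcomp H Ω v := compOf_subset_hcomp hle hC hv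
    calc 2 * (meeting W C).card
        ≤ 2 * (meeting W (hcomp H Ω v)).card :=
          Nat.mul_le_mul_left 2 (Finset.card_le_card (meeting_mono W hsub))
      _ ≤ W.card := hsmall v hvΩ
  · exfalso
    push_neg at hgood
    have hTne : ∃ m : ℕ, ∃ Ω v, IsMaxClique H Ω ∧ v ∉ Ω ∧
        W.card < 2 * (meeting W (hcomp H Ω v)).card ∧ m = (hcomp H Ω v).ncard := by
      obtain ⟨Ω₀, -, hΩ₀⟩ := exists_maxclique H (H.isClique_empty)
      obtain ⟨u, huΩ, hheavy⟩ := hgood Ω₀ hΩ₀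
      exact ⟨_, Ω₀, u, hΩ₀, huΩ, hheavy, rfl⟩
    obtain ⟨Ω, v, hΩ, hvΩ, hheavy, hncard⟩ := Nat.find_spec hTne
    set C : Set V := hcomp H Ω v with hCdef
    have hvC : v ∈ C := hcomp_self
    have hCΩ : ∀ u ∈ C, u ∉ Ω := hcomp_not_mem hvΩ
    set S : Set V := nbhd H C with hSdef
    have hSΩ : ∀ s ∈ S, s ∈ Ω := by
      intro s hs
      by_contra h
      exact hs.1 (hcomp_closed hvΩ hs.2.choose_spec.1 hs.2.choose_spec.2 h)
    have hCclS : ∀ u ∈ C, ∀ w, H.Adj u w → w ∉ S → w ∈ C := by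
      intro u hu w hadj hwS
      by_contra hwC
      exact hwS ⟨hwC, u, hu, hadj⟩
    have hSclique : H.IsClique S := hΩ.1.subset (fun s hs => hSΩ s hs)
    obtain ⟨x, hxC, hxS⟩ := dirac hch ⟨v, hvC⟩ (hcomp_conn) S.toFinset
      (fun s hs => (Set.mem_toFinset.mp hs).1)
      (by rw [Set.coe_toFinset]; exact hSclique)
      (by
        intro s hs
        obtain ⟨u, hu, hadj⟩ := (Set.mem_toFinset.mp hs).2
        exact ⟨u, hu, hadj.symm⟩)
    have hxS' : ∀ s ∈ S, H.Adj x s := fun s hs => hxS s (Set.mem_toFinset.mpr hs)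
    have hxnS : x ∉ S := fun h => h.1 hxC
    have hclq : H.IsClique (insert x S) :=
      hSclique.insert (fun s hs _ => hxS' s hs)
    obtain ⟨Ω', hsub', hΩ'⟩ := exists_maxclique H hclq
    have hxΩ' : x ∈ Ω' := hsub' (Set.mem_insert x S)
    have hSΩ' : ∀ s ∈ S, s ∈ Ω' := fun s hs => hsub' (Set.mem_insert_of_mem _ hs)
    obtain ⟨u, huΩ', hheavy'⟩ := hgood Ω' hΩ'
    set D : Set V := hcomp H Ω' u with hDdef
    have huD : u ∈ D := hcomp_self
    have hDΩ' : ∀ w ∈ D, w ∉ Ω' := hcomp_not_mem huΩ'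
    by_cases huC : u ∈ C
    · -- the heavy component of Ω' is strictly inside C
      have hDC : D ⊆ C := by
        intro w hw
        rw [hDdef, mem_hcomp] at hw
        induction hw with
        | refl => exact huC
        | @tail b c hab hbc ih =>
            exact hCclS b ih c hbc.1 (fun hbS => hbc.2.2 (hSΩ' _ hbS))
      have hne : D ≠ C := fun h => (hDΩ' x (h ▸ hxC)) hxΩ'
      have hcard : D.ncard < C.ncard :=
        Set.ncard_lt_ncard (hDC.ssubset_of_ne hne) (Set.toFinite _)
      have hmin : Nat.find hTne ≤ D.ncard :=
        Nat.find_min' hTne ⟨Ω', u, hΩ', huΩ', hheavy', rfl⟩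
      omega
    · -- the heavy component of Ω' avoids C entirely; disjoint weights
      have hDout : ∀ w ∈ D, w ∉ C ∧ w ∉ S := by
        intro w hw
        rw [hDdef, mem_hcomp] at hw
        induction hw with
        | refl => exact ⟨huC, fun h => huΩ' (hSΩ' _ h)⟩
        | @tail b c hab hbc ih =>
            have hcS : c ∉ S := fun h => hbc.2.2 (hSΩ' _ h)
            refine ⟨fun hcC => ?_, hcS⟩
            exact (fun hbS => hbc.2.1 (hSΩ' _ hbS)) ⟨ih.1, c, hcC, hbc.1.symm⟩
      have hdisjCD : Disjoint (meeting W C) (meeting W D) := by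
        rw [Finset.disjoint_left]
        intro K hKC hKD
        rw [meeting, Finset.mem_filter] at hKC hKD
        obtain ⟨b, hbK, hbC⟩ := hKC.2
        obtain ⟨a, haK, haD⟩ := hKD.2
        have hab : a ≠ b := fun h => (hDout a haD).1 (h ▸ hbC)
        have hGadj : G.Adj b a := hW.1 K hKC.1 hbK haK (fun h => hab h.symm)
        exact (hDout a haD).2 ⟨(hDout a haD).1, b, hbC, hle hGadj⟩
      have hsum : (meeting W C).card + (meeting W D).card ≤ W.card := by
        rw [← Finset.card_union_of_disjoint hdisjCD]
        exact Finset.card_le_card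
          (Finset.union_subset (Finset.filter_subset _ _) (Finset.filter_subset _ _))
      omega

end PaperECC
end

section
/- Let G be a finite simple graph, W an edge clique cover of G, and C a block of G. Then every member of W[C] is contained in N[C], and the collection W[C] ∪ {N(C)} is an edge clique cover of the realization R(C); in particular R(C) has an edge clique cover of size at most |W[C]| + 1. -/
open scoped Classical

namespace PaperECC

variable {V : Type*}

/-- Every clique of `W[C]` lies inside `N[C]`, and `W[C] ∪ {N(C)}` is an
edge clique cover of the realization `R(C)` of size at most `|W[C]| + 1`. -/
theorem realization_ecc {V : Type*} [Fintype V] (G : SimpleGraph V)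
    (W : Finset (Set V)) (hW : IsECC G W) (C : Set V) (hC : IsBlock G C) :
    (∀ K ∈ meeting W C, K ⊆ closedNbhd G C) ∧
      IsECC (realization G C) (insert (nbhd G C) (meeting W C)) ∧
      (insert (nbhd G C) (meeting W C)).card ≤ (meeting W C).card + 1 := by
  have hsub : ∀ K ∈ meeting W C, K ⊆ closedNbhd G C := by
    intro K hK v hv
    simp only [meeting, Finset.mem_filter] at hK
    obtain ⟨hKW, u, hu⟩ := hK
    obtain ⟨huK, huC⟩ := hu
    by_cases hvC : v ∈ C
    · exact Or.inl hvC
    · by_cases hvu : v = u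
      · exact absurd (hvu ▸ huC) hvC
      · exact Or.inr ⟨hvC, u, huC, hW.1 K hKW huK hv (Ne.symm hvu)⟩
  refine ⟨hsub, ⟨?_, ?_⟩, Finset.card_insert_le _ _⟩
  · intro K hK
    rcases Finset.mem_insert.mp hK with h | h
    · subst h
      intro u hu v hv hne
      exact ⟨hne, Or.inr hu, Or.inr hv, Or.inr ⟨hu, hv⟩⟩
    · intro u hu v hv hne
      simp only [meeting, Finset.mem_filter] at h
      exact ⟨hne, hsub K (by simpa [meeting] using h) hu,
        hsub K (by simpa [meeting] using h) hv,
        Or.inl (hW.1 K h.1 hu hv hne)⟩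
  · intro u v huv
    obtain ⟨hne, hu, hv, hcase⟩ := huv
    by_cases hmem : u ∈ C ∨ v ∈ C
    · rcases hcase with hadj | ⟨hun, hvn⟩
      · obtain ⟨K, hKW, huK, hvK⟩ := hW.2 u v hadj
        refine ⟨K, Finset.mem_insert_of_mem ?_, huK, hvK⟩
        simp only [meeting, Finset.mem_filter]
        rcases hmem with h | h
        · exact ⟨hKW, u, huK, h⟩
        · exact ⟨hKW, v, hvK, h⟩
      · exact absurd hmem (by push_neg; exact ⟨hun.1, hvn.1⟩)
    · push_neg at hmem
      have hun : u ∈ nbhd G C := hu.resolve_left hmem.1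
      have hvn : v ∈ nbhd G C := hv.resolve_left hmem.2
      exact ⟨nbhd G C, Finset.mem_insert_self _ _, hun, hvn⟩

end PaperECC
end
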